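/- arXiv:2110.07680 — 2 statements merged into one kernel-verified Lean document; each statement's English description precedes it below -/
import Mathlib

section
/- For vectors k_i, k_j in a Hilbert space with orthogonal projections P_i, P_j onto their spans, the operator norm ‖P_i - P_j‖ equals sqrt(1 - |⟨k_i,k_j⟩|²/(‖k_i‖²‖k_j‖²)), provided k_i and k_j are nonzero. -/
open scoped ComplexInnerProductSpace
open Complex

private lemma proj_congr_aux {H : Type*} [NormedAddCommGroup H] [InnerProductSpace ℂ H]
    (K₁ K₂ : Submodule ℂ H) [CompleteSpace K₁] [CompleteSpace K₂]
    (h : K₁ = K₂) :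
    (K₁.subtypeL.comp (Submodule.orthogonalProjectionOnto K₁) : H →L[ℂ] H) =
      K₂.subtypeL.comp (Submodule.orthogonalProjectionOnto K₂) := by
  subst h; rfl

private lemma aux_norm_main {H : Type*} [NormedAddCommGroup H] [InnerProductSpace ℂ H]
    [CompleteSpace H] (u v : H) (hu : ‖u‖ = 1) (hv : ‖v‖ = 1)
    (hlt : ‖(⟪u, v⟫ : ℂ)‖ < 1) :
    ‖((ℂ ∙ u).subtypeL.comp (Submodule.orthogonalProjectionOnto (ℂ ∙ u)) : H →L[ℂ] H) -
      (ℂ ∙ v).subtypeL.comp (Submodule.orthogonalProjectionOnto (ℂ ∙ v))‖ =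
    Real.sqrt (1 - ‖⟪u, v⟫‖ ^ 2) := by
  set t : ℂ := ⟪u, v⟫ with ht
  set s : ℝ := Real.sqrt (1 - ‖t‖ ^ 2) with hsdef
  have hs2 : s ^ 2 = 1 - ‖t‖ ^ 2 := Real.sq_sqrt (by nlinarith [norm_nonneg t])
  have hspos : 0 < s := Real.sqrt_pos.2 (by nlinarith [norm_nonneg t])
  have hts : t * (starRingEnd ℂ) t = 1 - (s : ℂ) ^ 2 := by
    rw [Complex.mul_conj']
    have : ((s : ℝ) : ℂ) ^ 2 = ((s ^ 2 : ℝ) : ℂ) := by push_cast; ring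
    rw [this, hs2]; push_cast; ring
  set w : H := v - t • u with hw
  have huu : ⟪u, u⟫ = (1 : ℂ) := by rw [inner_self_eq_norm_sq_to_K, hu]; norm_num
  have huw : ⟪u, w⟫ = 0 := by
    rw [hw, inner_sub_right, inner_smul_right, huu, mul_one, ht, sub_self]
  have hww : ⟪w, w⟫ = ((s : ℂ)) ^ 2 := by
    have hvu : ⟪v, u⟫ = (starRingEnd ℂ) t := by rw [ht, ← inner_conj_symm]
    rw [hw, inner_sub_left, inner_sub_right, inner_sub_right, inner_smul_left,
      inner_smul_right, inner_smul_left, inner_smul_right, huu, ← ht, hvu,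
      inner_self_eq_norm_sq_to_K, hv]
    simp only [Complex.coe_algebraMap]
    push_cast
    linear_combination -hts
  have hnw : ‖w‖ = s := by
    have h := hww
    rw [inner_self_eq_norm_sq_to_K] at h
    simp only [Complex.coe_algebraMap] at h
    norm_cast at h
    nlinarith [norm_nonneg w, hspos.le]
  set e : H := ((s : ℂ))⁻¹ • w with he
  have hsne : ((s : ℂ)) ≠ 0 := by exact_mod_cast hspos.ne'
  have hue : ⟪u, e⟫ = 0 := by rw [he, inner_smul_right, huw, mul_zero]
  have heu : ⟪e, u⟫ = 0 := by rw [← inner_conj_symm, hue, map_zero]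
  have hee : ⟪e, e⟫ = 1 := by
    rw [he, inner_smul_left, inner_smul_right, hww]
    rw [Complex.conj_inv, Complex.conj_ofReal]
    field_simp
  have hne : ‖e‖ = 1 := by
    have h := hee
    rw [inner_self_eq_norm_sq_to_K] at h
    simp only [Complex.coe_algebraMap] at h
    norm_cast at h
    nlinarith [norm_nonneg e]
  have hve : v = t • u + (s : ℂ) • e := by
    rw [he, smul_smul, mul_inv_cancel₀ hsne, one_smul, hw]; abel
  -- norm of combinations of u, e
  have hnorm2 : ∀ c₁ c₂ : ℂ, ‖c₁ • u + c₂ • e‖ ^ 2 = ‖c₁‖ ^ 2 + ‖c₂‖ ^ 2 := by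
    intro c₁ c₂
    rw [@norm_add_sq ℂ]
    rw [inner_smul_left, inner_smul_right, hue]
    simp [norm_smul, hu, hne]
  set P : H →L[ℂ] H := ((ℂ ∙ u).subtypeL.comp (Submodule.orthogonalProjectionOnto (ℂ ∙ u)) : H →L[ℂ] H) -
      (ℂ ∙ v).subtypeL.comp (Submodule.orthogonalProjectionOnto (ℂ ∙ v)) with hP
  -- key pointwise formula
  have key : ∀ x : H, ‖P x‖ ^ 2 = s ^ 2 * (‖(⟪u, x⟫ : ℂ)‖ ^ 2 + ‖(⟪e, x⟫ : ℂ)‖ ^ 2) := by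
    intro x
    set α : ℂ := ⟪u, x⟫ with hα
    set β : ℂ := ⟪e, x⟫ with hβ
    have hvx : (⟪v, x⟫ : ℂ) = (starRingEnd ℂ) t * α + (s : ℂ) * β := by
      rw [hve, inner_add_left, inner_smul_left, inner_smul_left, Complex.conj_ofReal, hα, hβ]
    have hPx : P x = (α - t * ((starRingEnd ℂ) t * α + (s:ℂ) * β)) • u +
        (-((s:ℂ) * ((starRingEnd ℂ) t * α + (s:ℂ) * β))) • e := by
      rw [hP, ContinuousLinearMap.sub_apply]
      simp only [ContinuousLinearMap.comp_apply, Submodule.subtypeL_apply]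
      rw [← Submodule.starProjection_apply, Submodule.starProjection_unit_singleton ℂ hu,
        ← Submodule.starProjection_apply, Submodule.starProjection_unit_singleton ℂ hv,
        hvx, hve, ← hα]
      module
    rw [hPx, hnorm2]
    -- now a computation in ℂ
    have hc : ∀ z : ℂ, ‖z‖ ^ 2 = Complex.normSq z := fun z => by
      rw [Complex.sq_norm]
    rw [hc, hc, hc, hc]
    have main : (α - t * ((starRingEnd ℂ) t * α + (s:ℂ) * β)) *
          (starRingEnd ℂ) (α - t * ((starRingEnd ℂ) t * α + (s:ℂ) * β)) +
        (-((s:ℂ) * ((starRingEnd ℂ) t * α + (s:ℂ) * β))) *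
          (starRingEnd ℂ) (-((s:ℂ) * ((starRingEnd ℂ) t * α + (s:ℂ) * β))) =
        ((s:ℂ))^2 * (α * (starRingEnd ℂ) α + β * (starRingEnd ℂ) β) := by
      simp only [map_mul, map_add, map_sub, map_neg, Complex.conj_conj, Complex.conj_ofReal]
      linear_combination (α * (starRingEnd ℂ) α * (t * (starRingEnd ℂ) t - 1) +
        (s:ℂ) * (starRingEnd ℂ) t * α * (starRingEnd ℂ) β +
        (s:ℂ) * t * (starRingEnd ℂ) α * β + (s:ℂ)^2 * β * (starRingEnd ℂ) β) * hts
    simp only [Complex.mul_conj] at main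
    have : (((Complex.normSq (α - t * ((starRingEnd ℂ) t * α + (s:ℂ) * β)) +
        Complex.normSq (-((s:ℂ) * ((starRingEnd ℂ) t * α + (s:ℂ) * β)))) : ℝ) : ℂ) =
        (((s^2 * (Complex.normSq α + Complex.normSq β)) : ℝ) : ℂ) := by
      push_cast
      linear_combination main
    exact_mod_cast this
  have bessel : ∀ x : H, ‖(⟪u, x⟫ : ℂ)‖ ^ 2 + ‖(⟪e, x⟫ : ℂ)‖ ^ 2 ≤ ‖x‖ ^ 2 := by
    intro x
    set α : ℂ := ⟪u, x⟫ with hα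
    set β : ℂ := ⟪e, x⟫ with hβ
    have h0 : (0 : ℝ) ≤ ‖x - (α • u + β • e)‖ ^ 2 := sq_nonneg _
    rw [@norm_sub_sq ℂ, hnorm2] at h0
    have hre : RCLike.re (⟪x, α • u + β • e⟫ : ℂ) = ‖α‖ ^ 2 + ‖β‖ ^ 2 := by
      have hxu : (⟪x, u⟫ : ℂ) = (starRingEnd ℂ) α := by rw [hα, inner_conj_symm]
      have hxe : (⟪x, e⟫ : ℂ) = (starRingEnd ℂ) β := by rw [hβ, inner_conj_symm]
      rw [inner_add_right, inner_smul_right, inner_smul_right, hxu, hxe,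
        Complex.mul_conj, Complex.mul_conj]
      simp [Complex.normSq_eq_norm_sq, ← Complex.ofReal_pow]
    rw [hre] at h0
    linarith
  have hPu : ‖P u‖ = s := by
    have h := key u
    rw [huu, heu] at h
    simp only [norm_one, norm_zero] at h
    nlinarith [norm_nonneg (P u), hspos.le]
  have hub : ‖P‖ ≤ s := by
    refine P.opNorm_le_bound hspos.le (fun x => ?_)
    have h := key x
    have hb := bessel x
    have h2 : ‖P x‖ ^ 2 ≤ (s * ‖x‖) ^ 2 := by
      rw [h, mul_pow]
      exact mul_le_mul_of_nonneg_left hb (sq_nonneg s)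
    nlinarith [norm_nonneg (P x), mul_nonneg hspos.le (norm_nonneg x)]
  have hlb : s ≤ ‖P‖ := by
    have h := P.le_opNorm u
    rw [hPu, hu, mul_one] at h
    exact h
  exact le_antisymm hub hlb

private lemma aux_norm {H : Type*} [NormedAddCommGroup H] [InnerProductSpace ℂ H]
    [CompleteSpace H] (u v : H) (hu : ‖u‖ = 1) (hv : ‖v‖ = 1) :
    ‖((ℂ ∙ u).subtypeL.comp (Submodule.orthogonalProjectionOnto (ℂ ∙ u)) : H →L[ℂ] H) -
      (ℂ ∙ v).subtypeL.comp (Submodule.orthogonalProjectionOnto (ℂ ∙ v))‖ =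
    Real.sqrt (1 - ‖⟪u, v⟫‖ ^ 2) := by
  have hu0 : u ≠ 0 := by intro h; rw [h, norm_zero] at hu; norm_num at hu
  have hv0 : v ≠ 0 := by intro h; rw [h, norm_zero] at hv; norm_num at hv
  have htle : ‖(⟪u, v⟫ : ℂ)‖ ≤ 1 := by
    have := norm_inner_le_norm (𝕜 := ℂ) u v
    rwa [hu, hv, mul_one] at this
  rcases eq_or_lt_of_le htle with h1 | hlt
  · obtain ⟨r, hr0, hrv⟩ := (norm_inner_eq_norm_iff hu0 hv0).1 (by rw [h1, hu, hv, mul_one])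
    have hr : ‖r‖ = 1 := by
      have : ‖v‖ = ‖r‖ * ‖u‖ := by rw [hrv, norm_smul]
      rw [hu, hv, mul_one] at this; exact this.symm
    have hr1 : r * (starRingEnd ℂ) r = 1 := by
      have := Complex.mul_conj' r
      rw [hr] at this; simpa using this
    have hops : ((ℂ ∙ v).subtypeL.comp (Submodule.orthogonalProjectionOnto (ℂ ∙ v)) : H →L[ℂ] H) =
        (ℂ ∙ u).subtypeL.comp (Submodule.orthogonalProjectionOnto (ℂ ∙ u)) := by
      ext x
      simp only [ContinuousLinearMap.comp_apply, Submodule.subtypeL_apply]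
      rw [← Submodule.starProjection_apply (ℂ ∙ u), Submodule.starProjection_unit_singleton ℂ hu,
        ← Submodule.starProjection_apply (ℂ ∙ v), Submodule.starProjection_unit_singleton ℂ hv,
        hrv, inner_smul_left, smul_smul, mul_comm, ← mul_assoc, hr1, one_mul]
    rw [hops, sub_self, norm_zero, h1]
    norm_num [Real.sqrt_zero]
  · exact aux_norm_main u v hu hv hlt

/-- For nonzero vectors `ki, kj`, the operator norm of the difference of the orthogonal
projections onto their spans equals `√(1 - |⟪ki,kj⟫|²/(‖ki‖²‖kj‖²))`. -/
theorem stmt_1 {H : Type*} [NormedAddCommGroup H] [InnerProductSpace ℂ H]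
    [CompleteSpace H] (ki kj : H) (hi : ki ≠ 0) (hj : kj ≠ 0) :
    ‖((ℂ ∙ ki).subtypeL.comp (Submodule.orthogonalProjectionOnto (ℂ ∙ ki)) :  H →L[ℂ] H) -
      (ℂ ∙ kj).subtypeL.comp (Submodule.orthogonalProjectionOnto (ℂ ∙ kj))‖ =
    Real.sqrt (1 - ‖⟪ki, kj⟫‖ ^ 2 / (‖ki‖ ^ 2 * ‖kj‖ ^ 2)) := by
  have hni : ‖ki‖ ≠ 0 := norm_ne_zero_iff.2 hi
  have hnj : ‖kj‖ ≠ 0 := norm_ne_zero_iff.2 hj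
  set u : H := ((‖ki‖ : ℂ))⁻¹ • ki with hudef
  set v : H := ((‖kj‖ : ℂ))⁻¹ • kj with hvdef
  have hu : ‖u‖ = 1 := by
    rw [hudef, norm_smul, norm_inv, Complex.norm_real, Real.norm_eq_abs,
      _root_.abs_of_nonneg (norm_nonneg ki), inv_mul_cancel₀ hni]
  have hv : ‖v‖ = 1 := by
    rw [hvdef, norm_smul, norm_inv, Complex.norm_real, Real.norm_eq_abs,
      _root_.abs_of_nonneg (norm_nonneg kj), inv_mul_cancel₀ hnj]
  have hsi : (ℂ ∙ u) = ℂ ∙ ki :=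
    Submodule.span_singleton_smul_eq
      (IsUnit.mk0 _ (inv_ne_zero (by exact_mod_cast hni))) ki
  have hsj : (ℂ ∙ v) = ℂ ∙ kj :=
    Submodule.span_singleton_smul_eq
      (IsUnit.mk0 _ (inv_ne_zero (by exact_mod_cast hnj))) kj
  have h := aux_norm u v hu hv
  rw [proj_congr_aux _ _ hsi, proj_congr_aux _ _ hsj] at h
  rw [h]
  congr 1
  have hin : (⟪u, v⟫ : ℂ) = ((‖ki‖ : ℂ))⁻¹ * ((‖kj‖ : ℂ))⁻¹ * ⟪ki, kj⟫ := by
    rw [hudef, hvdef, inner_smul_left, inner_smul_right, Complex.conj_inv,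
      Complex.conj_ofReal]
    ring
  rw [hin]
  rw [norm_mul, norm_mul, norm_inv, norm_inv, Complex.norm_real, Complex.norm_real,
    Real.norm_eq_abs, Real.norm_eq_abs, _root_.abs_of_nonneg (norm_nonneg ki),
    _root_.abs_of_nonneg (norm_nonneg kj)]
  field_simp
end

section
/- A finite dimensional RKHS H with kernel basis {k_i} admits a conjugation operator J with ⟨k_i, J k_j⟩ = δ_{ij} (i.e., J maps the kernel basis to its dual basis) if and only if its Gram matrix K satisfies K Kᵀ = I, i.e., K is an orthogonal matrix (K⁻¹ = Kᵀ). -/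
open scoped ComplexInnerProductSpace Matrix

/-- A finite dimensional RKHS with kernel basis `{kᵢ}` admits a conjugation operator mapping
the kernel basis to its dual basis iff its Gram matrix `K` satisfies `K * Kᵀ = 1`. -/
theorem stmt_4 {H : Type*} [NormedAddCommGroup H] [InnerProductSpace ℂ H]
    [FiniteDimensional ℂ H] {n : ℕ} (b : Module.Basis (Fin n) ℂ H) :
    (∃ J : H → H,
      (∀ u v, J (u + v) = J u + J v) ∧
      (∀ (lam : ℂ) (u : H), J (lam • u) = (starRingEnd ℂ) lam • J u) ∧
      (∀ u, ‖J u‖ = ‖u‖) ∧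
      (∀ u, J (J u) = u) ∧
      (∀ i j, ⟪b i, J (b j)⟫ = if i = j then 1 else 0)) ↔
    (Matrix.of fun i j => ⟪b i, b j⟫) * (Matrix.of fun i j => ⟪b i, b j⟫)ᵀ = 1 := by
  constructor
  · rintro ⟨J, hadd, hsmul, -, hinv, hdelta⟩
    set Jh : H →+ H := AddMonoidHom.mk' J hadd with hJh
    have Jrep : ∀ v : H, J v = ∑ m, (starRingEnd ℂ) (b.repr v m) • J (b m) := by
      intro v
      conv_lhs => rw [← b.sum_repr v]
      show Jh _ = _
      rw [map_sum]
      exact Finset.sum_congr rfl fun m _ => hsmul _ _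
    -- coefficients of J (b j) in the basis
    have hc : ∀ j i, b.repr (J (b j)) i = ⟪b j, b i⟫ := by
      intro j i
      have h1 : (⟪b i, b j⟫ : ℂ) = (starRingEnd ℂ) (b.repr (J (b j)) i) := by
        conv_lhs => rw [← hinv (b j), Jrep (J (b j))]
        rw [inner_sum]
        simp only [inner_smul_right, hdelta, mul_ite, mul_one, mul_zero]
        simp
      have := congrArg (starRingEnd ℂ) h1
      simp only [RingHom.id_apply, starRingEnd_self_apply] at this
      rw [← this, inner_conj_symm]
    ext i j
    simp only [Matrix.mul_apply, Matrix.transpose_apply, Matrix.of_apply, Matrix.one_apply]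
    have h2 := hdelta i j
    conv_lhs at h2 => rw [← b.sum_repr (J (b j))]
    rw [inner_sum] at h2
    simp only [inner_smul_right, hc] at h2
    rw [← h2]
    exact Finset.sum_congr rfl fun m _ => by rw [mul_comm]
  · intro hK
    have hK2 : (Matrix.of fun i j => (⟪b i, b j⟫ : ℂ))ᵀ * (Matrix.of fun i j => ⟪b i, b j⟫) = 1 :=
      mul_eq_one_comm.mp hK
    have hKe : ∀ i j, (∑ m, (⟪b i, b m⟫ : ℂ) * ⟪b j, b m⟫) = if i = j then 1 else 0 := by
      intro i j
      have := congrFun (congrFun hK i) j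
      simpa [Matrix.mul_apply, Matrix.one_apply] using this
    have hK2e : ∀ i j, (∑ m, (⟪b m, b i⟫ : ℂ) * ⟪b m, b j⟫) = if i = j then 1 else 0 := by
      intro i j
      have := congrFun (congrFun hK2 i) j
      simpa [Matrix.mul_apply, Matrix.one_apply] using this
    set Jf : H → H := fun u => ∑ m, (starRingEnd ℂ) ⟪b m, u⟫ • b m with hJf
    have hinner : ∀ (l : Fin n) (u : H), (⟪b l, Jf u⟫ : ℂ) = ∑ m, (starRingEnd ℂ) ⟪b m, u⟫ * ⟪b l, b m⟫ := by
      intro l u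
      rw [hJf]
      simp [inner_sum, inner_smul_right]
    have hcoef : ∀ (u : H) (l : Fin n), (∑ m, (⟪b m, u⟫ : ℂ) * ⟪b m, b l⟫) = b.repr u l := by
      intro u l
      have a : ∀ m : Fin n, (⟪b m, u⟫ : ℂ) = ∑ i, b.repr u i * ⟪b m, b i⟫ := by
        intro m
        conv_lhs => rw [← b.sum_repr u]
        rw [inner_sum]
        simp [inner_sum, inner_smul_right, mul_comm]
      calc (∑ m, (⟪b m, u⟫ : ℂ) * ⟪b m, b l⟫)
          = ∑ m, ∑ i, b.repr u i * (⟪b m, b i⟫ * ⟪b m, b l⟫) := by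
            refine Finset.sum_congr rfl fun m _ => ?_
            rw [a m, Finset.sum_mul]
            exact Finset.sum_congr rfl fun i _ => by ring
        _ = ∑ i, b.repr u i * ∑ m, (⟪b m, b i⟫ : ℂ) * ⟪b m, b l⟫ := by
            rw [Finset.sum_comm]
            exact Finset.sum_congr rfl fun i _ => by rw [Finset.mul_sum]
        _ = b.repr u l := by
            simp only [hK2e]
            simp
    have hJinv : ∀ u, Jf (Jf u) = u := by
      intro u
      conv_lhs => rw [hJf]
      simp only [hinner]
      have : ∀ l : Fin n, (starRingEnd ℂ) (∑ m, (starRingEnd ℂ) ⟪b m, u⟫ * ⟪b l, b m⟫)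
          = b.repr u l := by
        intro l
        rw [map_sum, ← hcoef u l]
        refine Finset.sum_congr rfl fun m _ => ?_
        rw [map_mul]
        simp
      change ∑ x, (starRingEnd ℂ) ⟪b x, Jf u⟫ • b x = u
      simp only [hinner, this]
      exact b.sum_repr u
    have hsym : ∀ u v, (⟪Jf u, v⟫ : ℂ) = ⟪Jf v, u⟫ := by
      intro u v
      rw [hJf]
      simp only [sum_inner, inner_smul_left, starRingEnd_self_apply]
      exact Finset.sum_congr rfl fun m _ => mul_comm _ _
    refine ⟨Jf, ?_, ?_, ?_, hJinv, ?_⟩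
    · intro u v
      simp [hJf, inner_add_left, add_smul, Finset.sum_add_distrib]
    · intro lam u
      rw [hJf]
      simp only [inner_smul_right, map_mul, Finset.smul_sum]
      exact Finset.sum_congr rfl fun m _ => by rw [smul_smul]
    · intro u
      have h : (⟪Jf u, Jf u⟫ : ℂ) = ⟪u, u⟫ := by rw [hsym u (Jf u), hJinv]
      rw [@norm_eq_sqrt_re_inner ℂ, @norm_eq_sqrt_re_inner ℂ, h]
    · intro i j
      rw [hinner]
      rw [← hKe i j]
      refine Finset.sum_congr rfl fun m _ => ?_
      rw [← inner_conj_symm (b j) (b m)]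
      ring
end
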